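/- Preservation for the CPS fragment of the symmetric data/codata calculus: if the closed command c₁ is well-typed (⋄ ⊢ c₁ :cmd with respect to a well-formed program P) and c₁ reduces in one step to c₂ (c₁ ▷ c₂), then c₂ is also well-typed (⋄ ⊢ c₂ :cmd). -/

import Mathlib

namespace SymCalc

/-! Basic syntactic categories of the symmetric data/codata calculus (CPS fragment). -/

abbrev Var := String
abbrev TName := String
abbrev XName := String

inductive Polarity | dat | cod
deriving DecidableEq, Repr

inductive Orientation | prd | con
deriving DecidableEq, Repr

inductive Strategy | cbv | cbn
deriving DecidableEq, Repr

def Polarity.flip : Polarity → Polarity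
  | .dat => .cod | .cod => .dat

def Orientation.flip : Orientation → Orientation
  | .prd => .con | .con => .prd

def Strategy.flip : Strategy → Strategy
  | .cbv => .cbn | .cbn => .cbv

/-- `val p` : the orientation of the canonical xtors of a type of polarity `p`. -/
def Polarity.val : Polarity → Orientation
  | .dat => .prd | .cod => .con

/-- `cnt p` : the orientation of (co)pattern matches on a type of polarity `p`. -/
def Polarity.cnt : Polarity → Orientation
  | .dat => .con | .cod => .prd

/-- Typing contexts: each variable carries an orientation (producer/consumer) and a type name.
The head of the list is the innermost binding. -/
abbrev Ctx := List (Var × Orientation × TName)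

/-- Erase the variable names of a context, keeping orientations and types. -/
def eraseCtx (Γ : Ctx) : List (Orientation × TName) := Γ.map (·.2)

mutual
/-- Expressions `e ::= x | 𝒳σ | match_p T { 𝒳Δ ⇒ c; … }`. -/
inductive Expr : Type
  | var : Var → Expr
  | xtor : XName → List Expr → Expr
  | mtch : Polarity → TName → List (XName × Ctx × Cmd) → Expr
/-- Commands `c ::= e₁ ≫ e₂ | Done`. -/
inductive Cmd : Type
  | cut : Expr → Expr → Cmd
  | done : Cmd
end

/-! Substitution. -/

abbrev Env := List (Var × Expr)

/-- Remove the bindings shadowed by the bound variables `xs`. -/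
def shadowV (xs : List Var) (m : Env) : Env :=
  m.filter (fun q => ¬ xs.contains q.1)

mutual
/-- Substitute the (closed) expressions of `m` for free variables in an expression. -/
def substExpr (m : Env) : Expr → Expr
  | .var x => (m.lookup x).getD (.var x)
  | .xtor n σ => .xtor n (σ.attach.map (fun ⟨e, _⟩ => substExpr m e))
  | .mtch p T cases =>
      .mtch p T (cases.attach.map
        (fun ⟨cs, _⟩ => (cs.1, cs.2.1, substCmd (shadowV (cs.2.1.map (·.1)) m) cs.2.2)))
termination_by e => sizeOf e
decreasing_by
  · have h := List.sizeOf_lt_of_mem ‹e ∈ σ›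
    simp only [Expr.xtor.sizeOf_spec]; omega
  · have h := List.sizeOf_lt_of_mem ‹cs ∈ cases›
    obtain ⟨n', Δ', c'⟩ := cs
    simp only [Expr.mtch.sizeOf_spec, Prod.mk.sizeOf_spec] at h ⊢; omega
/-- Substitute the (closed) expressions of `m` for free variables in a command. -/
def substCmd (m : Env) : Cmd → Cmd
  | .cut e₁ e₂ => .cut (substExpr m e₁) (substExpr m e₂)
  | .done => .done
termination_by c => sizeOf c
decreasing_by
  · simp only [Cmd.cut.sizeOf_spec]; omega
  · simp only [Cmd.cut.sizeOf_spec]; omega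
end

/-- Pair the variables of a context with the expressions of a substitution. -/
def bindArgs (Δ : Ctx) (σ : List Expr) : Env := List.zip (Δ.map (·.1)) σ

/-! Programs. -/

/-- A function declaration `𝒳Π := match_p T { 𝒴Δ ⇒ c; … }` (co)pattern matching on
all xtors of the type it belongs to. -/
structure FunDecl where
  name : XName
  args : Ctx
  cases : List (XName × Ctx × Cmd)

/-- A type declaration `s p type T { 𝒳Δ; … } with f₁ … fₙ`. -/
structure TypeDecl where
  strat : Strategy
  pol : Polarity
  name : TName
  xtors : List (XName × Ctx)
  funs : List FunDecl

/-- A program: a list of type declarations together with a top-level command. -/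
structure Program where
  decls : List TypeDecl
  main : Cmd

def Program.findType (P : Program) (T : TName) : Option TypeDecl :=
  P.decls.find? (fun td => td.name = T)

/-! Typing. -/

mutual
/-- Expression typing `Γ ⊢ e :ᵒ T` (producer/consumer typing). -/
inductive HasTy (P : Program) : Ctx → Expr → Orientation → TName → Prop
  | var : ∀ Γ x o T, Γ.lookup x = some (o, T) → HasTy P Γ (.var x) o T
  | xtor : ∀ Γ td X Δ τ, td ∈ P.decls → (X, Δ) ∈ td.xtors →
      SubstTy P Γ τ Δ → HasTy P Γ (.xtor X τ) td.pol.val td.name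
  | fn : ∀ Γ td f τ, td ∈ P.decls → f ∈ td.funs →
      SubstTy P Γ τ f.args → HasTy P Γ (.xtor f.name τ) td.pol.cnt td.name
  | mtch : ∀ Γ td cases, td ∈ P.decls →
      cases.map (fun cs => (cs.1, eraseCtx cs.2.1)) = td.xtors.map (fun g => (g.1, eraseCtx g.2)) →
      (∀ cs ∈ cases, CmdTy P (cs.2.1 ++ Γ) cs.2.2) →
      HasTy P Γ (.mtch td.pol td.name cases) td.pol.cnt td.name
/-- Substitution typing `Γ ⊢ σ : Δ`. -/
inductive SubstTy (P : Program) : Ctx → List Expr → Ctx → Prop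
  | nil : ∀ Γ, SubstTy P Γ [] []
  | cons : ∀ Γ σ Δ e x o T, SubstTy P Γ σ Δ → HasTy P Γ e o T →
      SubstTy P Γ (e :: σ) ((x, o, T) :: Δ)
/-- Command typing `Γ ⊢ c :cmd`. -/
inductive CmdTy (P : Program) : Ctx → Cmd → Prop
  | cut : ∀ Γ e₁ e₂ T, HasTy P Γ e₁ .prd T → HasTy P Γ e₂ .con T → CmdTy P Γ (.cut e₁ e₂)
  | done : ∀ Γ, CmdTy P Γ .done
end

/-! Operational semantics. -/

/-- One-step reduction of closed commands, relative to a program `P`. -/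
inductive Step (P : Program) : Cmd → Cmd → Prop
  | mtch : ∀ X σ T cases Δ c, (X, Δ, c) ∈ cases →
      Step P (.cut (.xtor X σ) (.mtch .dat T cases)) (substCmd (bindArgs Δ σ) c)
  | comtch : ∀ X σ T cases Δ c, (X, Δ, c) ∈ cases →
      Step P (.cut (.mtch .cod T cases) (.xtor X σ)) (substCmd (bindArgs Δ σ) c)
  | conCall : ∀ td f Y Δ c σ τ, td ∈ P.decls → td.pol = .dat → f ∈ td.funs →
      (Y, Δ, c) ∈ f.cases →
      Step P (.cut (.xtor Y τ) (.xtor f.name σ))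
        (substCmd (bindArgs f.args σ) (substCmd (bindArgs Δ τ) c))
  | prdCall : ∀ td f Y Δ c σ τ, td ∈ P.decls → td.pol = .cod → f ∈ td.funs →
      (Y, Δ, c) ∈ f.cases →
      Step P (.cut (.xtor f.name σ) (.xtor Y τ))
        (substCmd (bindArgs f.args σ) (substCmd (bindArgs Δ τ) c))

/-! Well-formedness of programs. -/

/-- Well-formedness of a function declaration belonging to the type declaration `td`
(rule Wf-Fun): the (co)pattern match is exhaustive, binds exactly the declared
argument contexts, and each case body typechecks. -/
def FunWf (P : Program) (td : TypeDecl) (f : FunDecl) : Prop :=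
  f.cases.map (fun cs => (cs.1, cs.2.1)) = td.xtors ∧
  ∀ cs ∈ f.cases, CmdTy P (cs.2.1 ++ f.args) cs.2.2

/-- All names used in a program are unambiguous. -/
def NamesUnambiguous (P : Program) : Prop :=
  (P.decls.map (·.name)).Nodup ∧
  (P.decls.flatMap (fun td => td.xtors.map (·.1) ++ td.funs.map (·.name))).Nodup

/-- Well-formedness of programs (rules Wf-Prog and Wf-Type). -/
def Program.wf (P : Program) : Prop :=
  NamesUnambiguous P ∧
  (∀ td ∈ P.decls, ∀ f ∈ td.funs, FunWf P td f) ∧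
  CmdTy P [] P.main



/-! ### Auxiliary lemmas for preservation -/

section Aux

variable {P : Program}

theorem lookup_cons_eq {β : Type _} {x : Var} {o : β} {l : List (Var × β)} :
    List.lookup x ((x, o) :: l) = some o := by
  simp [List.lookup_cons]

theorem lookup_cons_ne {β : Type _} {x y : Var} {o : β} {l : List (Var × β)} (h : x ≠ y) :
    List.lookup x ((y, o) :: l) = List.lookup x l := by
  have : (x == y) = false := by simp [h]
  simp [List.lookup_cons, this]

theorem lookup_mem_keys {β : Type _} {x : Var} {l : List (Var × β)} {v : β}
    (h : List.lookup x l = some v) : x ∈ l.map (·.1) := by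
  induction l with
  | nil => simp [List.lookup] at h
  | cons a l ih =>
    obtain ⟨y, o⟩ := a
    by_cases hxy : x = y
    · simp [hxy]
    · rw [lookup_cons_ne hxy] at h
      simp [ih h]

theorem lookup_eq_none_of_not_mem {β : Type _} {x : Var} {l : List (Var × β)}
    (h : x ∉ l.map (·.1)) : List.lookup x l = none := by
  cases hl : List.lookup x l with
  | none => rfl
  | some v => exact absurd (lookup_mem_keys hl) h

theorem not_mem_keys_of_lookup_eq_none {β : Type _} {x : Var} {l : List (Var × β)}
    (h : List.lookup x l = none) : x ∉ l.map (·.1) := by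
  intro hmem
  induction l with
  | nil => simp at hmem
  | cons a l ih =>
    obtain ⟨y, o⟩ := a
    by_cases hxy : x = y
    · subst hxy; rw [lookup_cons_eq] at h; exact Option.some_ne_none _ h
    · rw [lookup_cons_ne hxy] at h
      simp only [List.map_cons, List.mem_cons] at hmem
      rcases hmem with hmem | hmem
      · exact hxy hmem
      · exact ih h hmem

theorem shadowV_cons (xs : List Var) (y : Var) (e : Expr) (m : Env) :
    shadowV xs ((y, e) :: m) =
      if xs.contains y then shadowV xs m else (y, e) :: shadowV xs m := by
  simp only [shadowV, List.filter_cons]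
  cases xs.contains y <;> simp

theorem shadowV_lookup_mem {xs : List Var} {m : Env} {x : Var} (h : x ∈ xs) :
    List.lookup x (shadowV xs m) = none := by
  induction m with
  | nil => rfl
  | cons a m ih =>
    obtain ⟨y, e⟩ := a
    rw [shadowV_cons]
    by_cases hy : xs.contains y
    · rw [if_pos hy]; exact ih
    · rw [if_neg hy]
      have hxy : x ≠ y := by
        intro hxy; subst hxy
        exact hy (List.elem_eq_true_of_mem h)
      rw [lookup_cons_ne hxy]
      exact ih

theorem shadowV_lookup_not_mem {xs : List Var} {m : Env} {x : Var} (h : x ∉ xs) :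
    List.lookup x (shadowV xs m) = List.lookup x m := by
  induction m with
  | nil => rfl
  | cons a m ih =>
    obtain ⟨y, e⟩ := a
    rw [shadowV_cons]
    by_cases hy : xs.contains y
    · rw [if_pos hy]
      have hxy : x ≠ y := by
        intro hxy; subst hxy
        exact h (List.mem_of_elem_eq_true hy)
      rw [lookup_cons_ne hxy, ih]
    · rw [if_neg hy]
      by_cases hxy : x = y
      · subst hxy; rw [lookup_cons_eq, lookup_cons_eq]
      · rw [lookup_cons_ne hxy, lookup_cons_ne hxy, ih]


mutual
theorem weakenHasTy {Γ : Ctx} (Γ₂ : Ctx) :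
    ∀ {e o T}, HasTy P Γ e o T → HasTy P (Γ ++ Γ₂) e o T
  | .var x, _, _, .var _ _ o T hx =>
      .var _ _ _ _ (by rw [List.lookup_append, hx]; rfl)
  | .xtor _ τ, _, _, .xtor _ td _ Δ _ h1 h2 h3 =>
      .xtor _ _ _ _ _ h1 h2 (weakenSubstTy Γ₂ h3)
  | .xtor _ τ, _, _, .fn _ td f _ h1 h2 h3 =>
      .fn _ _ _ _ h1 h2 (weakenSubstTy Γ₂ h3)
  | .mtch _ _ cs, _, _, .mtch _ td _ h1 h2 h3 =>
      .mtch _ _ _ h1 h2 (fun c hc =>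
        List.append_assoc _ _ _ ▸ weakenCmdTy Γ₂ (h3 c hc))
termination_by e _ _ _ => sizeOf e
decreasing_by
  · simp only [Expr.xtor.sizeOf_spec]; omega
  · simp only [Expr.xtor.sizeOf_spec]; omega
  · have h := List.sizeOf_lt_of_mem hc
    obtain ⟨n', Δ', c'⟩ := c
    simp only [Expr.mtch.sizeOf_spec, Prod.mk.sizeOf_spec] at h ⊢
    omega

theorem weakenSubstTy {Γ : Ctx} (Γ₂ : Ctx) :
    ∀ {σ : List Expr} {Δ : Ctx}, SubstTy P Γ σ Δ → SubstTy P (Γ ++ Γ₂) σ Δ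
  | [], _, .nil _ => .nil _
  | e :: σ, _, .cons _ _ Δ _ x o T h1 h2 =>
      .cons _ _ _ _ _ _ _ (weakenSubstTy Γ₂ h1) (weakenHasTy Γ₂ h2)
termination_by σ _ _ => sizeOf σ
decreasing_by
  · simp only [List.cons.sizeOf_spec]; omega
  · simp only [List.cons.sizeOf_spec]; omega

theorem weakenCmdTy {Γ : Ctx} (Γ₂ : Ctx) :
    ∀ {c : Cmd}, CmdTy P Γ c → CmdTy P (Γ ++ Γ₂) c
  | .cut e₁ e₂, .cut _ _ _ T h1 h2 =>
      .cut _ _ _ _ (weakenHasTy Γ₂ h1) (weakenHasTy Γ₂ h2)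
  | .done, .done _ => .done _
termination_by c _ => sizeOf c
decreasing_by
  · simp only [Cmd.cut.sizeOf_spec]; omega
  · simp only [Cmd.cut.sizeOf_spec]; omega
end

/-! ### Substitution -/

/-- The environment `m` maps variables of `Γ` either to closed well-typed expressions
or leaves them to be looked up in `Γ'`. -/
def EnvOk (P : Program) (Γ' Γ : Ctx) (m : Env) : Prop :=
  ∀ x o T, Γ.lookup x = some (o, T) →
    (∃ e, m.lookup x = some e ∧ HasTy P [] e o T) ∨
    (m.lookup x = none ∧ Γ'.lookup x = some (o, T))

theorem envOk_shadow {Γ' Γ Δ : Ctx} {m : Env} (h : EnvOk P Γ' Γ m) :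
    EnvOk P (Δ ++ Γ') (Δ ++ Γ) (shadowV (Δ.map (·.1)) m) := by
  intro x o T hx
  rw [List.lookup_append] at hx
  cases hΔ : List.lookup x Δ with
  | some v =>
    rw [hΔ] at hx
    simp only [Option.or] at hx
    right
    refine ⟨shadowV_lookup_mem (lookup_mem_keys hΔ), ?_⟩
    rw [List.lookup_append, hΔ]
    simpa using hx
  | none =>
    rw [hΔ] at hx
    simp only [Option.or] at hx
    have hnm : x ∉ Δ.map (·.1) := not_mem_keys_of_lookup_eq_none hΔ
    rw [shadowV_lookup_not_mem hnm]
    rcases h x o T hx with ⟨e, he, hty⟩ | ⟨he, hΓ'⟩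
    · exact Or.inl ⟨e, he, hty⟩
    · right
      refine ⟨he, ?_⟩
      rw [List.lookup_append, hΔ, hΓ']
      rfl

theorem envOk_bindArgs {σ : List Expr} (Γ' : Ctx) :
    ∀ {Δ : Ctx}, SubstTy P [] σ Δ → EnvOk P Γ' (Δ ++ Γ') (bindArgs Δ σ) := by
  induction σ with
  | nil =>
    intro Δ h
    cases h with
    | nil =>
      intro x o T hx
      right
      exact ⟨rfl, by simpa using hx⟩
  | cons e σ ih =>
    intro Δ h
    cases h with
    | cons _ _ Δ _ y o' T' h1 h2 =>
      intro x o T hx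
      by_cases hxy : x = y
      · subst hxy
        rw [List.cons_append, lookup_cons_eq] at hx
        injection hx with hx
        left
        refine ⟨e, ?_, ?_⟩
        · show List.lookup x (List.zip (x :: Δ.map (·.1)) (e :: σ)) = some e
          rw [List.zip_cons_cons, lookup_cons_eq]
        · obtain ⟨rfl, rfl⟩ := Prod.ext_iff.mp hx
          exact h2
      · rw [List.cons_append, lookup_cons_ne hxy] at hx
        have hb : List.lookup x (bindArgs ((y, o', T') :: Δ) (e :: σ)) =
            List.lookup x (bindArgs Δ σ) := by
          show List.lookup x (List.zip (y :: Δ.map (·.1)) (e :: σ)) = _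
          rw [List.zip_cons_cons]
          exact lookup_cons_ne hxy
        rw [hb]
        exact ih h1 x o T hx

theorem substExpr_var (m : Env) (x : Var) :
    substExpr m (.var x) = (m.lookup x).getD (.var x) := by
  rw [substExpr]

theorem substExpr_xtor (m : Env) (n : XName) (σ : List Expr) :
    substExpr m (.xtor n σ) = .xtor n (σ.map (substExpr m)) := by
  rw [substExpr]
  congr 1
  exact List.attach_map_val (l := σ) (f := substExpr m)

theorem substExpr_mtch (m : Env) (p : Polarity) (T : TName)
    (cases : List (XName × Ctx × Cmd)) :
    substExpr m (.mtch p T cases) = .mtch p T (cases.map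
      (fun cs => (cs.1, cs.2.1, substCmd (shadowV (cs.2.1.map (·.1)) m) cs.2.2))) := by
  rw [substExpr]
  congr 1
  exact List.attach_map_val (l := cases)
    (f := fun cs => (cs.1, cs.2.1, substCmd (shadowV (cs.2.1.map (·.1)) m) cs.2.2))

theorem substCmd_cut (m : Env) (e₁ e₂ : Expr) :
    substCmd m (.cut e₁ e₂) = .cut (substExpr m e₁) (substExpr m e₂) := by
  rw [substCmd]

mutual
theorem substHasTy {Γ Γ' : Ctx} {m : Env} (hm : EnvOk P Γ' Γ m) :
    ∀ {e o T}, HasTy P Γ e o T → HasTy P Γ' (substExpr m e) o T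
  | .var x, o, T, .var _ _ _ _ hx => by
      rcases hm x o T hx with ⟨e, he, hty⟩ | ⟨he, hΓ'⟩
      · rw [substExpr_var, he]
        have := weakenHasTy Γ' hty
        simpa using this
      · rw [substExpr_var, he]
        exact .var _ _ _ _ hΓ'
  | .xtor _ τ, _, _, .xtor _ td X Δ _ h1 h2 h3 => by
      rw [substExpr_xtor]
      exact .xtor _ _ _ _ _ h1 h2 (substSubstTy hm h3)
  | .xtor _ τ, _, _, .fn _ td f _ h1 h2 h3 => by
      rw [substExpr_xtor]
      exact .fn _ _ _ _ h1 h2 (substSubstTy hm h3)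
  | .mtch _ _ cs, _, _, .mtch _ td _ h1 h2 h3 => by
      rw [substExpr_mtch]
      refine .mtch _ _ _ h1 ?_ ?_
      · rw [List.map_map, ← h2]
        rfl
      · intro cs' hcs'
        obtain ⟨c, hc, rfl⟩ := List.mem_map.mp hcs'
        exact substCmdTy (envOk_shadow hm) (h3 c hc)
termination_by e _ _ _ => sizeOf e
decreasing_by
  · simp only [Expr.xtor.sizeOf_spec]; omega
  · simp only [Expr.xtor.sizeOf_spec]; omega
  · have h := List.sizeOf_lt_of_mem hc
    obtain ⟨n', Δ', c'⟩ := c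
    simp only [Expr.mtch.sizeOf_spec, Prod.mk.sizeOf_spec] at h ⊢
    omega

theorem substSubstTy {Γ Γ' : Ctx} {m : Env} (hm : EnvOk P Γ' Γ m) :
    ∀ {σ : List Expr} {Δ : Ctx}, SubstTy P Γ σ Δ →
      SubstTy P Γ' (σ.map (substExpr m)) Δ
  | [], _, .nil _ => .nil _
  | e :: σ, _, .cons _ _ Δ _ x o T h1 h2 =>
      .cons _ _ _ _ _ _ _ (substSubstTy hm h1) (substHasTy hm h2)
termination_by σ _ _ => sizeOf σ
decreasing_by
  · simp only [List.cons.sizeOf_spec]; omega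
  · simp only [List.cons.sizeOf_spec]; omega

theorem substCmdTy {Γ Γ' : Ctx} {m : Env} (hm : EnvOk P Γ' Γ m) :
    ∀ {c : Cmd}, CmdTy P Γ c → CmdTy P Γ' (substCmd m c)
  | .cut e₁ e₂, .cut _ _ _ T h1 h2 => by
      rw [substCmd_cut]
      exact .cut _ _ _ _ (substHasTy hm h1) (substHasTy hm h2)
  | .done, .done _ => by rw [substCmd]; exact .done _
termination_by c _ => sizeOf c
decreasing_by
  · simp only [Cmd.cut.sizeOf_spec]; omega
  · simp only [Cmd.cut.sizeOf_spec]; omega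
end

/-- The key substitution lemma for one (co)pattern-match case. -/
theorem subst_closed {Γ' Δ : Ctx} {σ : List Expr} {c : Cmd}
    (hc : CmdTy P (Δ ++ Γ') c) (hσ : SubstTy P [] σ Δ) :
    CmdTy P Γ' (substCmd (bindArgs Δ σ) c) :=
  substCmdTy (envOk_bindArgs Γ' hσ) hc

/-- Substitution typing depends only on the erased context. -/
theorem substTy_eraseCtx {Γ : Ctx} :
    ∀ {σ : List Expr} {Δ₁ Δ₂ : Ctx}, SubstTy P Γ σ Δ₁ →
      eraseCtx Δ₂ = eraseCtx Δ₁ → SubstTy P Γ σ Δ₂ := by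
  intro σ
  induction σ with
  | nil =>
    intro Δ₁ Δ₂ h he
    cases h
    cases Δ₂ with
    | nil => exact .nil _
    | cons a Δ₂ => simp [eraseCtx] at he
  | cons e σ ih =>
    intro Δ₁ Δ₂ h he
    cases h with
    | cons _ _ Δ _ x o T h1 h2 =>
      cases Δ₂ with
      | nil => simp [eraseCtx] at he
      | cons a Δ₂ =>
        obtain ⟨y, o', T'⟩ := a
        simp only [eraseCtx, List.map_cons, List.cons.injEq] at he
        obtain ⟨he1, he2⟩ := he
        obtain ⟨rfl, rfl⟩ : o' = o ∧ T' = T := by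
          exact Prod.mk.injEq .. ▸ he1
        exact .cons _ _ _ _ _ _ _ (ih h1 he2) h2

/-! ### Name unambiguity consequences -/

theorem decl_unique (hN : NamesUnambiguous P) {td₁ td₂ : TypeDecl}
    (h1 : td₁ ∈ P.decls) (h2 : td₂ ∈ P.decls) (h : td₁.name = td₂.name) : td₁ = td₂ :=
  List.inj_on_of_nodup_map hN.1 h1 h2 h

/-- All xtor and function names introduced by one type declaration. -/
def chunk (td : TypeDecl) : List XName := td.xtors.map (·.1) ++ td.funs.map (·.name)

theorem chunk_nodup (hN : NamesUnambiguous P) {td : TypeDecl} (h : td ∈ P.decls) :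
    (chunk td).Nodup := by
  have h2 := hN.2
  rw [List.flatMap_def, List.nodup_flatten] at h2
  exact h2.1 _ (List.mem_map_of_mem h)

theorem chunk_disjoint (hN : NamesUnambiguous P) {td₁ td₂ : TypeDecl}
    (h1 : td₁ ∈ P.decls) (h2 : td₂ ∈ P.decls) (hne : td₁ ≠ td₂) :
    (chunk td₁).Disjoint (chunk td₂) := by
  have h3 := hN.2
  rw [List.flatMap_def, List.nodup_flatten] at h3
  have hpw := (List.pairwise_map).mp h3.2
  have hsym : Symmetric (fun a b : TypeDecl => (chunk a).Disjoint (chunk b)) :=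
    fun a b hab => List.Disjoint.symm hab
  haveI : Std.Symm (fun a b : TypeDecl => (a.xtors.map (·.1) ++ a.funs.map (·.name)).Disjoint
      (b.xtors.map (·.1) ++ b.funs.map (·.name))) := ⟨fun a b hab => List.Disjoint.symm hab⟩
  exact hpw.forall h1 h2 hne

theorem xtor_unique (hN : NamesUnambiguous P) {td : TypeDecl} (h : td ∈ P.decls)
    {X : XName} {Δ₁ Δ₂ : Ctx} (h1 : (X, Δ₁) ∈ td.xtors) (h2 : (X, Δ₂) ∈ td.xtors) :
    Δ₁ = Δ₂ := by
  have hnd : (td.xtors.map (·.1)).Nodup := (chunk_nodup hN h).of_append_left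
  have heq := List.inj_on_of_nodup_map hnd h1 h2 rfl
  exact (Prod.ext_iff.mp heq).2

theorem xtor_fun_clash (hN : NamesUnambiguous P) {td₁ td₂ : TypeDecl}
    (h1 : td₁ ∈ P.decls) (h2 : td₂ ∈ P.decls) {X : XName} {Δ : Ctx} {f : FunDecl}
    (hx : (X, Δ) ∈ td₁.xtors) (hf : f ∈ td₂.funs) (hname : f.name = X) : False := by
  have hmx : X ∈ td₁.xtors.map (·.1) := List.mem_map_of_mem hx
  have hmf : X ∈ td₂.funs.map (·.name) := hname ▸ List.mem_map_of_mem hf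
  by_cases he : td₁ = td₂
  · subst he
    exact List.disjoint_of_nodup_append (chunk_nodup hN h1) hmx hmf
  · exact chunk_disjoint hN h1 h2 he (List.mem_append_left _ hmx)
      (List.mem_append_right _ hmf)

theorem fun_unique (hN : NamesUnambiguous P) {td₁ td₂ : TypeDecl}
    (h1 : td₁ ∈ P.decls) (h2 : td₂ ∈ P.decls) {f₁ f₂ : FunDecl}
    (hf1 : f₁ ∈ td₁.funs) (hf2 : f₂ ∈ td₂.funs) (hname : f₁.name = f₂.name) :
    td₁ = td₂ ∧ f₁ = f₂ := by
  by_cases he : td₁ = td₂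
  · subst he
    have hnd : (td₁.funs.map (·.name)).Nodup := (chunk_nodup hN h1).of_append_right
    exact ⟨rfl, List.inj_on_of_nodup_map hnd hf1 hf2 hname⟩
  · exfalso
    have hm1 : f₁.name ∈ chunk td₁ :=
      List.mem_append_right _ (List.mem_map_of_mem hf1)
    have hm2 : f₁.name ∈ chunk td₂ :=
      List.mem_append_right _ (hname ▸ List.mem_map_of_mem hf2)
    exact chunk_disjoint hN h1 h2 he hm1 hm2

/-! ### Inversion lemmas -/

theorem inv_cut {Γ : Ctx} {e₁ e₂ : Expr} (h : CmdTy P Γ (.cut e₁ e₂)) :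
    ∃ T, HasTy P Γ e₁ .prd T ∧ HasTy P Γ e₂ .con T := by
  cases h with
  | cut _ _ _ T h1 h2 => exact ⟨T, h1, h2⟩

theorem inv_mtch {Γ : Ctx} {p : Polarity} {T₀ : TName}
    {cs : List (XName × Ctx × Cmd)} {o : Orientation} {T : TName}
    (h : HasTy P Γ (.mtch p T₀ cs) o T) :
    ∃ td, td ∈ P.decls ∧ td.pol = p ∧ td.name = T₀ ∧ T = T₀ ∧ o = p.cnt ∧
      cs.map (fun c => (c.1, eraseCtx c.2.1)) = td.xtors.map (fun g => (g.1, eraseCtx g.2)) ∧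
      (∀ c ∈ cs, CmdTy P (c.2.1 ++ Γ) c.2.2) := by
  cases h with
  | mtch _ td _ h1 h2 h3 => exact ⟨td, h1, rfl, rfl, rfl, rfl, h2, h3⟩

theorem inv_xtor {Γ : Ctx} {X : XName} {τ : List Expr} {o : Orientation} {T : TName}
    (h : HasTy P Γ (.xtor X τ) o T) :
    (∃ td Δ, td ∈ P.decls ∧ (X, Δ) ∈ td.xtors ∧ SubstTy P Γ τ Δ ∧
      o = td.pol.val ∧ T = td.name) ∨
    (∃ td f, td ∈ P.decls ∧ f ∈ td.funs ∧ f.name = X ∧ SubstTy P Γ τ f.args ∧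
      o = td.pol.cnt ∧ T = td.name) := by
  cases h with
  | xtor _ td _ Δ _ h1 h2 h3 => exact Or.inl ⟨td, Δ, h1, h2, h3, rfl, rfl⟩
  | fn _ td f _ h1 h2 h3 => exact Or.inr ⟨td, f, h1, h2, rfl, h3, rfl, rfl⟩

end Aux

/-- **Preservation** (Theorem 3.1): if the closed command `c₁` is well-typed with respect to
a well-formed program `P` and `c₁ ▷ c₂`, then `c₂` is also well-typed. -/
theorem preservation (P : Program) (hP : P.wf) (c₁ c₂ : Cmd)
    (h₁ : CmdTy P [] c₁) (hstep : Step P c₁ c₂) :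
    CmdTy P [] c₂ := by
  obtain ⟨hN, hF, -⟩ := hP
  cases hstep with
  | mtch X σ T₀ cases Δ c hmem =>
    obtain ⟨T, hp, hc⟩ := inv_cut h₁
    obtain ⟨td, htd, hpol, hname, hTT, -, hmap, hbody⟩ := inv_mtch hc
    rcases inv_xtor hp with ⟨td', Δ', htd', hx', hσ', ho', hT'⟩ |
      ⟨td', f, htd', hf', hfn, hσ', ho', hT'⟩
    · have hde : td' = td := decl_unique hN htd' htd (by rw [← hT', hTT, ← hname])
      subst hde
      have hmm : (X, eraseCtx Δ) ∈ td'.xtors.map (fun g => (g.1, eraseCtx g.2)) := by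
        rw [← hmap]
        exact List.mem_map_of_mem hmem
      obtain ⟨⟨X₂, Δ₂⟩, hx2, he2⟩ := List.mem_map.mp hmm
      obtain ⟨hX2, hE2⟩ := Prod.ext_iff.mp he2
      simp only at hX2 hE2
      subst hX2
      have hΔeq : Δ₂ = Δ' := xtor_unique hN htd' hx2 hx'
      have hσΔ : SubstTy P [] σ Δ := substTy_eraseCtx hσ' (by rw [← hE2, hΔeq])
      exact subst_closed (hbody _ hmem) hσΔ
    · exfalso
      have hcod : td'.pol = .cod := by
        cases hpd : td'.pol
        · rw [hpd] at ho'; simp [Polarity.cnt] at ho'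
        · rfl
      have hde : td' = td := decl_unique hN htd' htd (by rw [← hT', hTT, ← hname])
      rw [hde, hpol] at hcod
      exact Polarity.noConfusion hcod
  | comtch X σ T₀ cases Δ c hmem =>
    obtain ⟨T, hp, hc⟩ := inv_cut h₁
    obtain ⟨td, htd, hpol, hname, hTT, -, hmap, hbody⟩ := inv_mtch hp
    rcases inv_xtor hc with ⟨td', Δ', htd', hx', hσ', ho', hT'⟩ |
      ⟨td', f, htd', hf', hfn, hσ', ho', hT'⟩
    · have hde : td' = td := decl_unique hN htd' htd (by rw [← hT', hTT, ← hname])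
      subst hde
      have hmm : (X, eraseCtx Δ) ∈ td'.xtors.map (fun g => (g.1, eraseCtx g.2)) := by
        rw [← hmap]
        exact List.mem_map_of_mem hmem
      obtain ⟨⟨X₂, Δ₂⟩, hx2, he2⟩ := List.mem_map.mp hmm
      obtain ⟨hX2, hE2⟩ := Prod.ext_iff.mp he2
      simp only at hX2 hE2
      subst hX2
      have hΔeq : Δ₂ = Δ' := xtor_unique hN htd' hx2 hx'
      have hσΔ : SubstTy P [] σ Δ := substTy_eraseCtx hσ' (by rw [← hE2, hΔeq])
      exact subst_closed (hbody _ hmem) hσΔ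
    · exfalso
      have hdat : td'.pol = .dat := by
        cases hpd : td'.pol
        · rfl
        · rw [hpd] at ho'; simp [Polarity.cnt] at ho'
      have hde : td' = td := decl_unique hN htd' htd (by rw [← hT', hTT, ← hname])
      rw [hde, hpol] at hdat
      exact Polarity.noConfusion hdat
  | conCall td f Y Δ c σ τ htd hpol hf hmem =>
    obtain ⟨T, hp, hc⟩ := inv_cut h₁
    -- consumer: the function call
    have hσf : SubstTy P [] σ f.args ∧ T = td.name := by
      rcases inv_xtor hc with ⟨td', Δ', htd', hx', hσ', ho', hT'⟩ |
        ⟨td', f', htd', hf', hfn, hσ', ho', hT'⟩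
      · exact absurd (xtor_fun_clash hN htd' htd hx' hf rfl) not_false
      · obtain ⟨hde, hfe⟩ := fun_unique hN htd' htd hf' hf hfn
        subst hde; subst hfe
        exact ⟨hσ', hT'⟩
    obtain ⟨hσf, rfl⟩ := hσf
    -- producer: an xtor of td
    have hτΔ : SubstTy P [] τ Δ := by
      rcases inv_xtor hp with ⟨td', Δ', htd', hx', hσ', ho', hT'⟩ |
        ⟨td', f', htd', hf', hfn, hσ', ho', hT'⟩
      · have hde : td' = td := decl_unique hN htd' htd hT'.symm
        subst hde
        -- (Y, Δ) ∈ td'.xtors from FunWf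
        have hYΔ : (Y, Δ) ∈ td'.xtors := by
          have hw := (hF td' htd f hf).1
          rw [← hw]
          exact List.mem_map_of_mem hmem
        have : Δ' = Δ := xtor_unique hN htd hx' hYΔ
        exact this ▸ hσ'
      · exfalso
        have hde : td' = td := decl_unique hN htd' htd hT'.symm
        have hcod : td'.pol = .cod := by
          cases hpd : td'.pol
          · rw [hpd] at ho'; simp [Polarity.cnt] at ho'
          · rfl
        rw [hde, hpol] at hcod
        exact Polarity.noConfusion hcod
    have hbody : CmdTy P (Δ ++ f.args) c := (hF td htd f hf).2 _ hmem
    have hinner : CmdTy P f.args (substCmd (bindArgs Δ τ) c) := subst_closed hbody hτΔ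
    have hinner' : CmdTy P (f.args ++ []) (substCmd (bindArgs Δ τ) c) := by
      rwa [List.append_nil]
    exact subst_closed hinner' hσf
  | prdCall td f Y Δ c σ τ htd hpol hf hmem =>
    obtain ⟨T, hp, hc⟩ := inv_cut h₁
    have hσf : SubstTy P [] σ f.args ∧ T = td.name := by
      rcases inv_xtor hp with ⟨td', Δ', htd', hx', hσ', ho', hT'⟩ |
        ⟨td', f', htd', hf', hfn, hσ', ho', hT'⟩
      · exact absurd (xtor_fun_clash hN htd' htd hx' hf rfl) not_false
      · obtain ⟨hde, hfe⟩ := fun_unique hN htd' htd hf' hf hfn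
        subst hde; subst hfe
        exact ⟨hσ', hT'⟩
    obtain ⟨hσf, rfl⟩ := hσf
    have hτΔ : SubstTy P [] τ Δ := by
      rcases inv_xtor hc with ⟨td', Δ', htd', hx', hσ', ho', hT'⟩ |
        ⟨td', f', htd', hf', hfn, hσ', ho', hT'⟩
      · have hde : td' = td := decl_unique hN htd' htd hT'.symm
        subst hde
        have hYΔ : (Y, Δ) ∈ td'.xtors := by
          have hw := (hF td' htd f hf).1
          rw [← hw]
          exact List.mem_map_of_mem hmem
        have : Δ' = Δ := xtor_unique hN htd hx' hYΔ
        exact this ▸ hσ'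
      · exfalso
        have hde : td' = td := decl_unique hN htd' htd hT'.symm
        have hdat : td'.pol = .dat := by
          cases hpd : td'.pol
          · rfl
          · rw [hpd] at ho'; simp [Polarity.cnt] at ho'
        rw [hde, hpol] at hdat
        exact Polarity.noConfusion hdat
    have hbody : CmdTy P (Δ ++ f.args) c := (hF td htd f hf).2 _ hmem
    have hinner : CmdTy P f.args (substCmd (bindArgs Δ τ) c) := subst_closed hbody hτΔ
    have hinner' : CmdTy P (f.args ++ []) (substCmd (bindArgs Δ τ) c) := by
      rwa [List.append_nil]
    exact subst_closed hinner' hσf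

end SymCalc
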